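/- arXiv:1903.01607 — 2 statements merged into one kernel-verified Lean document; each statement's English description precedes it below -/
import Mathlib

section
/- Let v, w be fuzzy vectors on ℝⁿ with each level set w_α a closed ball centered at the origin (i.e., w symmetric). Then (v ⊕ w)_α = v_α + B_{λ_α} for all α ∈ [0,1], where λ_α is the radius of w_α, and consequently v_α is a regular inner parallel body of (v ⊕ w)_α: v_α = {t : t + B_{λ_α} ⊆ (v ⊕ w)_α} and (v ⊕ w)_α = v_α + B_{λ_α}. -/
open scoped RealInnerProductSpace Pointwise

noncomputable section

/-- A fuzzy vector: regular, compactly supported, quasi-concave, upper semi-continuous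
function `u : ℝⁿ → [0,1]`. -/
def IsFuzzyVector {n : ℕ} (u : EuclideanSpace ℝ (Fin n) → ℝ) : Prop :=
  (∀ t, u t ∈ Set.Icc (0:ℝ) 1) ∧
  (∃ t, u t = 1) ∧
  IsCompact (closure {t | 0 < u t}) ∧
  (∀ s t : EuclideanSpace ℝ (Fin n), ∀ lam ∈ Set.Icc (0:ℝ) 1,
      min (u s) (u t) ≤ u (lam • s + (1 - lam) • t)) ∧
  (∀ α : ℝ, IsClosed {t | α ≤ u t})

/-- The α-level sets of a fuzzy vector. -/
def levelSet {n : ℕ} (u : EuclideanSpace ℝ (Fin n) → ℝ) (α : ℝ) :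
    Set (EuclideanSpace ℝ (Fin n)) :=
  if α = 0 then closure {t | 0 < u t} else {t | α ≤ u t}

/-- The support function of a fuzzy vector. -/
def fuzzySupp {n : ℕ} (u : EuclideanSpace ℝ (Fin n) → ℝ) (α : ℝ)
    (x : EuclideanSpace ℝ (Fin n)) : ℝ :=
  sSup ((fun t => ⟪t, x⟫) '' levelSet u α)

/-- Addition of fuzzy vectors by Zadeh's extension principle. -/
def fuzzyAdd {n : ℕ} (v w : EuclideanSpace ℝ (Fin n) → ℝ) :
    EuclideanSpace ℝ (Fin n) → ℝ :=
  fun t => sSup {m : ℝ | ∃ r s, r + s = t ∧ m = min (v r) (w s)}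

section Aux

variable {n : ℕ}

local notation "E" => EuclideanSpace ℝ (Fin n)

lemma addSet_nonempty (v w : E → ℝ) (t : E) :
    {m : ℝ | ∃ r s, r + s = t ∧ m = min (v r) (w s)}.Nonempty :=
  ⟨min (v 0) (w t), 0, t, by simp, rfl⟩

lemma addSet_bdd (v w : E → ℝ) (hv1 : ∀ t, v t ∈ Set.Icc (0:ℝ) 1) (t : E) :
    BddAbove {m : ℝ | ∃ r s, r + s = t ∧ m = min (v r) (w s)} := by
  refine ⟨1, ?_⟩
  rintro m ⟨r, s, -, rfl⟩
  exact le_trans (min_le_left _ _) (hv1 r).2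

lemma le_fuzzyAdd (v w : E → ℝ) (hv1 : ∀ t, v t ∈ Set.Icc (0:ℝ) 1)
    (r s : E) : min (v r) (w s) ≤ fuzzyAdd v w (r + s) :=
  le_csSup (addSet_bdd v w hv1 _) ⟨r, s, rfl, rfl⟩

lemma lev_pos (v w : E → ℝ) (hv : IsFuzzyVector v) (hw : IsFuzzyVector w)
    {α : ℝ} (hα : 0 < α) :
    {t | α ≤ fuzzyAdd v w t} = {t | α ≤ v t} + {t | α ≤ w t} := by
  obtain ⟨hv1, hv2, hv3, hv4, hv5⟩ := hv
  obtain ⟨hw1, hw2, hw3, hw4, hw5⟩ := hw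
  ext t
  constructor
  · intro ht
    have hseq : ∀ k : ℕ, ∃ r : E, α - α / (k + 2) < min (v r) (w (t - r)) := by
      intro k
      have hpos : 0 < α / ((k:ℝ) + 2) := by positivity
      have hlt : α - α / ((k:ℝ) + 2) < fuzzyAdd v w t :=
        lt_of_lt_of_le (by linarith) ht
      rw [show fuzzyAdd v w t
          = sSup {m : ℝ | ∃ r s, r + s = t ∧ m = min (v r) (w s)} from rfl] at hlt
      obtain ⟨m, ⟨r, s, hrs, rfl⟩, hm⟩ :=
        exists_lt_of_lt_csSup (addSet_nonempty v w t) hlt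
      refine ⟨r, ?_⟩
      rwa [eq_sub_of_add_eq' hrs] at hm
    choose r hr using hseq
    have hδpos : ∀ k : ℕ, (0:ℝ) < α - α / (k + 2) := by
      intro k
      have hk : (0:ℝ) ≤ (k:ℝ) := Nat.cast_nonneg k
      have h1 : α / ((k:ℝ) + 2) < α := div_lt_self hα (by linarith)
      linarith
    have hrsupp : ∀ k, r k ∈ closure {x : E | 0 < v x} := by
      intro k
      refine subset_closure ?_
      exact lt_of_lt_of_le (hδpos k) (le_trans (hr k).le (min_le_left _ _))
    obtain ⟨r₀, hr₀K, φ, hφ, hconv⟩ := hv3.tendsto_subseq hrsupp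
    have hδlim : Filter.Tendsto (fun m : ℕ => α - α / (m + 2)) Filter.atTop (nhds α) := by
      have h0 : Filter.Tendsto (fun m : ℕ => α / ((m:ℝ) + 2)) Filter.atTop (nhds 0) := by
        have heqf : (fun m : ℕ => α / ((m:ℝ) + 2))
            = (fun n : ℕ => α / (n:ℝ)) ∘ (fun m => m + 2) := by
          funext m
          simp only [Function.comp_apply]
          push_cast
          ring
        rw [heqf]
        exact (tendsto_const_div_atTop_nhds_zero_nat α).comp
          (Filter.tendsto_add_atTop_nat 2)
      have := Filter.Tendsto.sub (tendsto_const_nhds (x := α)) h0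
      simpa using this
    have key : ∀ (u : E → ℝ) (x : ℕ → E) (x₀ : E),
        (∀ β : ℝ, IsClosed {y : E | β ≤ u y}) →
        Filter.Tendsto x Filter.atTop (nhds x₀) →
        (∀ k, α - α / ((φ k : ℝ) + 2) < u (x k)) → α ≤ u x₀ := by
      intro u x x₀ hcl hx hb
      have hm : ∀ m : ℕ, α - α / (m + 2) ≤ u x₀ := by
        intro m
        refine (hcl (α - α / (m + 2))).mem_of_tendsto hx ?_
        filter_upwards [Filter.eventually_ge_atTop m] with k hk
        have h1 : ((m:ℝ) + 2) ≤ ((φ k : ℝ) + 2) := by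
          have : (m:ℝ) ≤ (φ k : ℝ) := by
            exact_mod_cast hk.trans (hφ.le_apply)
          linarith
        have h2 : α / ((φ k : ℝ) + 2) ≤ α / ((m:ℝ) + 2) := by
          gcongr <;> first | positivity | linarith
        have := hb k
        show α - α / ((m:ℝ) + 2) ≤ u (x k)
        linarith
      exact le_of_tendsto hδlim (Filter.Eventually.of_forall hm)
    have hvα : α ≤ v r₀ :=
      key v (fun k => r (φ k)) r₀ hv5 hconv
        (fun k => lt_of_lt_of_le (hr (φ k)) (min_le_left _ _))
    have hwα : α ≤ w (t - r₀) := by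
      refine key w (fun k => t - r (φ k)) (t - r₀) hw5 ?_
        (fun k => lt_of_lt_of_le (hr (φ k)) (min_le_right _ _))
      exact Filter.Tendsto.sub tendsto_const_nhds hconv
    exact ⟨r₀, hvα, t - r₀, hwα, by show r₀ + (t - r₀) = t; abel⟩
  · rintro ⟨a, ha, b, hb, rfl⟩
    exact le_trans (le_min ha hb) (le_fuzzyAdd v w hv1 a b)

lemma supp_eq (v w : E → ℝ) (hv1 : ∀ t, v t ∈ Set.Icc (0:ℝ) 1) :
    {t : E | 0 < fuzzyAdd v w t} = {t : E | 0 < v t} + {t : E | 0 < w t} := by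
  ext t
  constructor
  · intro ht
    have ht' : (0:ℝ) < sSup {m : ℝ | ∃ r s, r + s = t ∧ m = min (v r) (w s)} := ht
    have : ∃ m ∈ {m : ℝ | ∃ r s, r + s = t ∧ m = min (v r) (w s)}, (0:ℝ) < m := by
      by_contra h
      push_neg at h
      exact absurd (csSup_le (addSet_nonempty v w t) h) (not_le.2 ht')
    obtain ⟨m, ⟨r, s, hrs, rfl⟩, hm⟩ := this
    exact ⟨r, lt_of_lt_of_le hm (min_le_left _ _), s,
      lt_of_lt_of_le hm (min_le_right _ _), hrs⟩
  · rintro ⟨a, ha, b, hb, rfl⟩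
    exact lt_of_lt_of_le (lt_min ha hb) (le_fuzzyAdd v w hv1 a b)

lemma lev_zero_full (v w : E → ℝ) (hv : IsFuzzyVector v) (hw : IsFuzzyVector w) :
    closure {t : E | 0 < fuzzyAdd v w t}
      = closure {t : E | 0 < v t} + closure {t : E | 0 < w t} := by
  rw [supp_eq v w hv.1]
  apply Set.Subset.antisymm
  · exact closure_minimal (Set.add_subset_add subset_closure subset_closure)
      (hv.2.2.1.add hw.2.2.1).isClosed
  · rintro x ⟨a, ha, b, hb, rfl⟩
    rw [mem_closure_iff_seq_limit] at ha hb ⊢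
    obtain ⟨u, hu, hua⟩ := ha
    obtain ⟨y, hy, hyb⟩ := hb
    exact ⟨fun k => u k + y k, fun k => ⟨u k, hu k, y k, hy k, rfl⟩, hua.add hyb⟩

lemma level_isClosed {v : E → ℝ} (hv : IsFuzzyVector v) (α : ℝ) :
    IsClosed (levelSet v α) := by
  unfold levelSet
  split
  · exact isClosed_closure
  · exact hv.2.2.2.2 α

lemma level_convex {v : E → ℝ} (hv : IsFuzzyVector v) {α : ℝ} (hα : 0 ≤ α) :
    Convex ℝ (levelSet v α) := by
  have hq := hv.2.2.2.1
  unfold levelSet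
  split
  · refine Convex.closure ?_
    intro x hx y hy a b ha hb hab
    have := hq x y a ⟨ha, by linarith⟩
    rw [show (1:ℝ) - a = b by linarith] at this
    exact lt_of_lt_of_le (lt_min hx hy) this
  · intro x hx y hy a b ha hb hab
    have := hq x y a ⟨ha, by linarith⟩
    rw [show (1:ℝ) - a = b by linarith] at this
    exact le_trans (le_min hx hy) this

lemma level_nonempty {v : E → ℝ} (hv : IsFuzzyVector v) {α : ℝ} (hα : α ≤ 1) :
    (levelSet v α).Nonempty := by
  obtain ⟨t, ht⟩ := hv.2.1
  unfold levelSet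
  split
  · exact ⟨t, subset_closure (by simp [ht])⟩
  · exact ⟨t, by simp [Set.mem_setOf_eq, ht, hα]⟩

lemma cancel (A : Set E) (hA : Convex ℝ A) (hcl : IsClosed A) (hne : A.Nonempty)
    (lam : ℝ) (hlam : 0 ≤ lam) :
    {t : E | ∀ b ∈ Metric.closedBall (0:E) lam,
      t + b ∈ A + Metric.closedBall (0:E) lam} = A := by
  ext t
  constructor
  · intro ht
    by_contra htA
    obtain ⟨f, u, hfu, hut⟩ := geometric_hahn_banach_closed_point hA hcl htA
    set y : E := (InnerProductSpace.toDual ℝ E).symm f with hy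
    have hfy : ∀ z : E, ⟪y, z⟫ = f z := fun z =>
      InnerProductSpace.toDual_symm_apply
    have hyne : y ≠ 0 := by
      intro h0
      obtain ⟨a, haA⟩ := hne
      have h1 := hfu a haA
      have h2 : f a = 0 := by rw [← hfy a, h0, inner_zero_left]
      have h3 : f t = 0 := by rw [← hfy t, h0, inner_zero_left]
      linarith
    have hynorm : (0:ℝ) < ‖y‖ := norm_pos_iff.2 hyne
    set b : E := (lam / ‖y‖) • y with hb
    have hbmem : b ∈ Metric.closedBall (0:E) lam := by
      rw [Metric.mem_closedBall, dist_zero_right, hb, norm_smul,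
        Real.norm_eq_abs, abs_of_nonneg (by positivity)]
      rw [div_mul_cancel₀ _ (ne_of_gt hynorm)]
    obtain ⟨p, hp, q, hq, hpq⟩ := ht b hbmem
    have hfq : f q ≤ ‖y‖ * lam := by
      rw [← hfy q]
      calc ⟪y, q⟫ ≤ ‖y‖ * ‖q‖ := real_inner_le_norm y q
        _ ≤ ‖y‖ * lam := by
            have : ‖q‖ ≤ lam := by
              rwa [Metric.mem_closedBall, dist_zero_right] at hq
            nlinarith
    have hfb : f b = lam * ‖y‖ := by
      rw [← hfy b, hb, real_inner_smul_right, real_inner_self_eq_norm_sq]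
      field_simp
    have heq : f p + f q = f t + lam * ‖y‖ := by
      have : f (p + q) = f (t + b) := congrArg f hpq
      rw [map_add, map_add, hfb] at this
      linarith
    have hfp := hfu p hp
    linarith
  · intro htA b hbmem
    exact ⟨t, htA, b, hbmem, rfl⟩

end Aux

theorem stmt14 {n : ℕ} (v w : EuclideanSpace ℝ (Fin n) → ℝ)
    (hv : IsFuzzyVector v) (hw : IsFuzzyVector w)
    (hsym : ∀ α ∈ Set.Icc (0:ℝ) 1, ∃ lam : ℝ, 0 ≤ lam ∧
      levelSet w α = Metric.closedBall 0 lam) :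
    ∀ α ∈ Set.Icc (0:ℝ) 1, ∀ lam : ℝ, 0 ≤ lam →
      levelSet w α = Metric.closedBall 0 lam →
      levelSet (fuzzyAdd v w) α = levelSet v α + Metric.closedBall 0 lam ∧
      levelSet v α =
        {t : EuclideanSpace ℝ (Fin n) |
          ∀ b ∈ Metric.closedBall (0 : EuclideanSpace ℝ (Fin n)) lam,
            t + b ∈ levelSet (fuzzyAdd v w) α} := by
  intro α hα lam hlam heq
  have h1 : levelSet (fuzzyAdd v w) α = levelSet v α + Metric.closedBall 0 lam := by
    rw [← heq]
    by_cases h0 : α = 0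
    · subst h0
      simp only [levelSet, if_pos rfl]
      exact lev_zero_full v w hv hw
    · simp only [levelSet, if_neg h0]
      exact lev_pos v w hv hw (lt_of_le_of_ne hα.1 (Ne.symm h0))
  refine ⟨h1, ?_⟩
  rw [h1]
  exact (cancel (levelSet v α) (level_convex hv hα.1) (level_isClosed hv α)
    (level_nonempty hv hα.2) lam hlam).symm
end
end

section
/- Every nonempty compact convex set A ⊆ ℝⁿ can be written uniquely as A = B + B_λ where B is an irreducible convex body (one with no non-trivial regular inner parallel body) and B_λ is a closed ball of some radius λ ≥ 0 centered at the origin; explicitly B = A_{−λ_A} and λ = λ_A = sup{μ ≥ 0 : A = A_{−μ} + B_μ}. -/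
open scoped RealInnerProductSpace Pointwise

noncomputable section

/-- The support function of a subset of ℝⁿ. -/
def suppFn {n : ℕ} (A : Set (EuclideanSpace ℝ (Fin n)))
    (x : EuclideanSpace ℝ (Fin n)) : ℝ :=
  sSup ((fun a => ⟪a, x⟫) '' A)

/-- The inner parallel body of `A` at distance `lam`:
`A₋λ = {t | t + B_λ ⊆ A}`. -/
def innerParallel {n : ℕ} (A : Set (EuclideanSpace ℝ (Fin n))) (lam : ℝ) :
    Set (EuclideanSpace ℝ (Fin n)) :=
  {t | ∀ b ∈ Metric.closedBall (0 : EuclideanSpace ℝ (Fin n)) lam, t + b ∈ A}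

/-- The set of distances at which `A` has a regular inner parallel body. -/
def regSet {n : ℕ} (A : Set (EuclideanSpace ℝ (Fin n))) : Set ℝ :=
  {lam | 0 ≤ lam ∧ A = innerParallel A lam + Metric.closedBall 0 lam}

/-- A convex body is irreducible if it has no non-trivial regular inner
parallel body. -/
def IrredBody {n : ℕ} (B : Set (EuclideanSpace ℝ (Fin n))) : Prop :=
  ∀ lam : ℝ, 0 ≤ lam →
    B = innerParallel B lam + Metric.closedBall 0 lam → lam = 0

open Metric Filter Topology

section Helpers
variable {n : ℕ}

lemma ip_add_ball_subset (A : Set (EuclideanSpace ℝ (Fin n))) (lam : ℝ) :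
    innerParallel A lam + Metric.closedBall 0 lam ⊆ A := by
  rintro x ⟨t, ht, b, hb, rfl⟩
  exact ht b hb

lemma ip_subset {A : Set (EuclideanSpace ℝ (Fin n))} {lam : ℝ} (h : 0 ≤ lam) :
    innerParallel A lam ⊆ A := fun t ht => by
  simpa using ht 0 (by simp [h])

lemma ip_closed {A : Set (EuclideanSpace ℝ (Fin n))} (hA : IsClosed A) (lam : ℝ) :
    IsClosed (innerParallel A lam) := by
  have : innerParallel A lam =
      ⋂ b ∈ Metric.closedBall (0 : EuclideanSpace ℝ (Fin n)) lam, (fun t => t + b) ⁻¹' A := by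
    ext t; simp [innerParallel]
  rw [this]
  exact isClosed_biInter fun b _ => hA.preimage (continuous_id.add continuous_const)

lemma ip_convex {A : Set (EuclideanSpace ℝ (Fin n))} (hA : Convex ℝ A) (lam : ℝ) :
    Convex ℝ (innerParallel A lam) := by
  intro t1 h1 t2 h2 a b ha hb hab c hc
  have hm := hA (h1 c hc) (h2 c hc) ha hb hab
  have he : a • (t1 + c) + b • (t2 + c) = (a • t1 + b • t2) + (a • c + b • c) := by
    rw [smul_add, smul_add]; abel
  have hc' : a • c + b • c = c := by rw [← add_smul, hab, one_smul]
  rwa [he, hc'] at hm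

lemma ip_comp {A : Set (EuclideanSpace ℝ (Fin n))} {a b : ℝ} (ha : 0 ≤ a) (hb : 0 ≤ b) :
    innerParallel A (a + b) = innerParallel (innerParallel A a) b := by
  have hball : Metric.closedBall (0 : EuclideanSpace ℝ (Fin n)) a + Metric.closedBall 0 b
      = Metric.closedBall 0 (a + b) := by
    rw [closedBall_add_closedBall ha hb, add_zero]
  ext t
  constructor
  · intro h β hβ α hα
    have hm : α + β ∈ Metric.closedBall (0 : EuclideanSpace ℝ (Fin n)) (a + b) := by
      rw [← hball]; exact Set.add_mem_add hα hβ
    have := h (α + β) hm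
    rwa [show t + (α + β) = t + β + α by abel] at this
  · intro h c hc
    rw [← hball] at hc
    obtain ⟨α, hα, β, hβ, rfl⟩ := hc
    have := h β hβ α hα
    rwa [show t + β + α = t + (α + β) by abel] at this

lemma add_subset_cancel {X Y C : Set (EuclideanSpace ℝ (Fin n))} (hY : Convex ℝ Y)
    (hYc : IsClosed Y) (hCne : C.Nonempty) (hCb : Bornology.IsBounded C)
    (h : X + C ⊆ Y + C) : X ⊆ Y := by
  obtain ⟨R, hR⟩ := isBounded_iff_forall_norm_le.mp hCb
  intro x hx
  have key : ∀ c : {d // d ∈ C}, ∃ y : EuclideanSpace ℝ (Fin n),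
      ∃ d : {d // d ∈ C}, y ∈ Y ∧ x + c.1 = y + d.1 := by
    intro c
    obtain ⟨y, hy, d, hd, hyd⟩ := h (Set.add_mem_add hx c.2)
    exact ⟨y, ⟨d, hd⟩, hy, hyd.symm⟩
  choose G F hG hEq using key
  obtain ⟨c0, hc0⟩ := hCne
  set cs : ℕ → {d // d ∈ C} := fun k => F^[k] ⟨c0, hc0⟩ with hcs
  have hstep : ∀ k, x + (cs k).1 = G (cs k) + (cs (k + 1)).1 := by
    intro k
    have h1 : cs (k + 1) = F (cs k) := Function.iterate_succ_apply' F k _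
    rw [h1]; exact hEq (cs k)
  have hGk : ∀ k, G (cs k) = x - ((cs (k + 1)).1 - (cs k).1) := by
    intro k
    have := hstep k
    have : G (cs k) = x + (cs k).1 - (cs (k + 1)).1 := by
      rw [this]; abel
    rw [this]; abel
  have hsum : ∀ m : ℕ, ∑ k ∈ Finset.range m, G (cs k)
      = (m : ℝ) • x + ((cs 0).1 - (cs m).1) := by
    intro m
    calc ∑ k ∈ Finset.range m, G (cs k)
        = ∑ k ∈ Finset.range m, (x - ((cs (k + 1)).1 - (cs k).1)) :=
          Finset.sum_congr rfl fun k _ => hGk k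
      _ = (m : ℝ) • x - ((cs m).1 - (cs 0).1) := by
          rw [Finset.sum_sub_distrib, Finset.sum_const, Finset.card_range,
            Finset.sum_range_sub (fun k => (cs k).1)]
          simp [Nat.cast_smul_eq_nsmul]
      _ = (m : ℝ) • x + ((cs 0).1 - (cs m).1) := by abel
  have havg : ∀ m : ℕ, 0 < m → x + (m : ℝ)⁻¹ • ((cs 0).1 - (cs m).1) ∈ Y := by
    intro m hm
    have hm' : (0 : ℝ) < m := Nat.cast_pos.mpr hm
    have hmem : ∑ k ∈ Finset.range m, (m : ℝ)⁻¹ • G (cs k) ∈ Y := by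
      apply hY.sum_mem (fun k _ => by positivity)
      · simp [Finset.sum_const, Finset.card_range, mul_inv_cancel₀ hm'.ne']
      · exact fun k _ => hG (cs k)
    have heq2 : ∑ k ∈ Finset.range m, (m : ℝ)⁻¹ • G (cs k)
        = x + (m : ℝ)⁻¹ • ((cs 0).1 - (cs m).1) := by
      rw [← Finset.smul_sum, hsum, smul_add, smul_smul, inv_mul_cancel₀ hm'.ne', one_smul]
    rwa [heq2] at hmem
  have hbound : ∀ m : ℕ, ‖(m : ℝ)⁻¹ • ((cs 0).1 - (cs m).1)‖ ≤ (m : ℝ)⁻¹ * (‖c0‖ + R) := by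
    intro m
    rw [norm_smul, norm_inv, Real.norm_natCast]
    apply mul_le_mul_of_nonneg_left _ (by positivity)
    calc ‖(cs 0).1 - (cs m).1‖ ≤ ‖(cs 0).1‖ + ‖(cs m).1‖ := norm_sub_le _ _
      _ ≤ ‖c0‖ + R := by
          have h0 : (cs 0).1 = c0 := rfl
          rw [h0]
          exact add_le_add le_rfl (hR _ (cs m).2)
  have hlim0 : Tendsto (fun m : ℕ => (m : ℝ)⁻¹ • ((cs 0).1 - (cs m).1)) atTop (𝓝 0) := by
    apply squeeze_zero_norm hbound
    have := (tendsto_inv_atTop_nhds_zero_nat (𝕜 := ℝ)).mul_const (‖c0‖ + R)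
    simpa using this
  have hlim : Tendsto (fun m : ℕ => x + (m : ℝ)⁻¹ • ((cs 0).1 - (cs m).1)) atTop (𝓝 x) := by
    simpa using tendsto_const_nhds.add hlim0
  exact hYc.mem_of_tendsto hlim (eventually_atTop.mpr ⟨1, fun m hm => havg m hm⟩)

lemma zero_mem_regSet (A : Set (EuclideanSpace ℝ (Fin n))) : (0 : ℝ) ∈ regSet A := by
  refine ⟨le_refl 0, ?_⟩
  have h1 : innerParallel A 0 = A := by
    ext t; simp [innerParallel, Metric.closedBall_zero]
  rw [h1, Metric.closedBall_zero]
  ext x; simp [Set.add_singleton]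

lemma bddAbove_regSet (hn : 0 < n) {A : Set (EuclideanSpace ℝ (Fin n))}
    (hne : A.Nonempty) (hcomp : IsCompact A) : BddAbove (regSet A) := by
  obtain ⟨R, hR⟩ := isBounded_iff_forall_norm_le.mp hcomp.isBounded
  refine ⟨R, fun lam hlam => ?_⟩
  obtain ⟨hl0, heq⟩ := hlam
  obtain ⟨a, ha⟩ := hne
  have hmem : a ∈ innerParallel A lam + Metric.closedBall 0 lam := by rw [← heq]; exact ha
  obtain ⟨t, ht, b, hb, rfl⟩ := hmem
  set e : EuclideanSpace ℝ (Fin n) := EuclideanSpace.single ⟨0, hn⟩ 1 with he_def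
  have he : ‖e‖ = 1 := by rw [he_def, EuclideanSpace.norm_single]; norm_num
  have hmem1 : lam • e ∈ Metric.closedBall (0 : EuclideanSpace ℝ (Fin n)) lam := by
    rw [mem_closedBall_zero_iff, norm_smul, he, mul_one, Real.norm_eq_abs, abs_of_nonneg hl0]
  have hmem2 : -(lam • e) ∈ Metric.closedBall (0 : EuclideanSpace ℝ (Fin n)) lam := by
    rw [mem_closedBall_zero_iff, norm_neg, norm_smul, he, mul_one, Real.norm_eq_abs,
      abs_of_nonneg hl0]
  have h1 := ht _ hmem1
  have h2 := ht _ hmem2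
  have hd : ‖(t + lam • e) - (t + -(lam • e))‖ = 2 * lam := by
    rw [show (t + lam • e) - (t + -(lam • e)) = (2 * lam) • e by rw [two_mul, add_smul]; abel,
      norm_smul, he, mul_one, Real.norm_eq_abs, abs_of_nonneg (by linarith)]
  have hle : ‖(t + lam • e) - (t + -(lam • e))‖ ≤ ‖t + lam • e‖ + ‖t + -(lam • e)‖ :=
    norm_sub_le _ _
  have := hR _ h1
  have := hR _ h2
  linarith [hd ▸ hle]

lemma sSup_mem_regSet (hn : 0 < n) {A : Set (EuclideanSpace ℝ (Fin n))}
    (hne : A.Nonempty) (hcomp : IsCompact A) : sSup (regSet A) ∈ regSet A := by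
  have hbdd := bddAbove_regSet hn hne hcomp
  have hne' : (regSet A).Nonempty := ⟨0, zero_mem_regSet A⟩
  set s := sSup (regSet A) with hs_def
  have hs0 : 0 ≤ s := le_csSup hbdd (zero_mem_regSet A)
  obtain ⟨u, hu_mono, hu_tend, hu_mem⟩ := exists_seq_tendsto_sSup hne' hbdd
  refine ⟨hs0, Set.Subset.antisymm ?_ (ip_add_ball_subset A s)⟩
  intro a ha
  have key : ∀ k, ∃ t ∈ innerParallel A (u k),
      ∃ b ∈ Metric.closedBall (0 : EuclideanSpace ℝ (Fin n)) (u k), t + b = a := by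
    intro k
    have : a ∈ innerParallel A (u k) + Metric.closedBall 0 (u k) := by
      rw [← (hu_mem k).2]; exact ha
    exact this
  choose t ht b hb hab using key
  have htA : ∀ k, t k ∈ A := fun k => ip_subset (hu_mem k).1 (ht k)
  obtain ⟨t0, ht0A, φ, hφ, hconv⟩ := hcomp.tendsto_subseq htA
  have hu_le : ∀ k, u k ≤ s := fun k => le_csSup hbdd (hu_mem k)
  have husub : Tendsto (fun k => u (φ k)) atTop (𝓝 s) := hu_tend.comp hφ.tendsto_atTop
  have ht0 : t0 ∈ innerParallel A s := by
    intro c hc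
    rcases eq_or_lt_of_le hs0 with h0 | hspos
    · have hc0 : c = 0 := by
        rw [← h0] at hc
        simpa using mem_closedBall_zero_iff.mp hc
      simpa [hc0] using ht0A
    · have hseq : ∀ k, t (φ k) + (u (φ k) / s) • c ∈ A := by
        intro k
        apply ht (φ k)
        rw [mem_closedBall_zero_iff, norm_smul, Real.norm_eq_abs,
          abs_of_nonneg (div_nonneg (hu_mem (φ k)).1 hs0)]
        have hcn : ‖c‖ ≤ s := mem_closedBall_zero_iff.mp hc
        calc u (φ k) / s * ‖c‖ ≤ u (φ k) / s * s :=
              mul_le_mul_of_nonneg_left hcn (div_nonneg (hu_mem (φ k)).1 hs0)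
          _ = u (φ k) := div_mul_cancel₀ _ hspos.ne'
      have h1 : Tendsto (fun k => u (φ k) / s) atTop (𝓝 1) := by
        have := husub.div_const s
        simpa [div_self hspos.ne'] using this
      have hlim2 : Tendsto (fun k => t (φ k) + (u (φ k) / s) • c) atTop (𝓝 (t0 + c)) := by
        have := hconv.add (h1.smul_const c)
        simpa using this
      exact hcomp.isClosed.mem_of_tendsto hlim2 (Filter.Eventually.of_forall hseq)
  have hbt : Tendsto (fun k => a - t (φ k)) atTop (𝓝 (a - t0)) := tendsto_const_nhds.sub hconv
  have hnorm : ‖a - t0‖ ≤ s := by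
    apply le_of_tendsto hbt.norm
    apply Filter.Eventually.of_forall
    intro k
    have : a - t (φ k) = b (φ k) := by rw [← hab (φ k)]; abel
    rw [this]
    exact (mem_closedBall_zero_iff.mp (hb (φ k))).trans (hu_le (φ k))
  exact ⟨t0, ht0, a - t0, mem_closedBall_zero_iff.mpr hnorm, by module⟩

end Helpers

theorem stmt18 {n : ℕ} (hn : 0 < n) (A : Set (EuclideanSpace ℝ (Fin n)))
    (hne : A.Nonempty) (hcomp : IsCompact A) (hconv : Convex ℝ A) :
    (0 ≤ sSup (regSet A) ∧
     IrredBody (innerParallel A (sSup (regSet A))) ∧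
     A = innerParallel A (sSup (regSet A)) +
       Metric.closedBall 0 (sSup (regSet A))) ∧
    (∀ (B : Set (EuclideanSpace ℝ (Fin n))) (lam : ℝ),
      B.Nonempty → IsCompact B → Convex ℝ B → 0 ≤ lam → IrredBody B →
      A = B + Metric.closedBall 0 lam →
      B = innerParallel A (sSup (regSet A)) ∧ lam = sSup (regSet A)) := by
  have hbdd := bddAbove_regSet hn hne hcomp
  obtain ⟨hs0, hdecomp⟩ := sSup_mem_regSet hn hne hcomp
  set s := sSup (regSet A) with hs_def
  have hball_add : ∀ {a b : ℝ}, 0 ≤ a → 0 ≤ b →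
      Metric.closedBall (0 : EuclideanSpace ℝ (Fin n)) a + Metric.closedBall 0 b
        = Metric.closedBall 0 (a + b) := by
    intro a b ha hb
    rw [closedBall_add_closedBall ha hb, add_zero]
  have hirred : IrredBody (innerParallel A s) := by
    intro μ hμ heq2
    have hmem : s + μ ∈ regSet A := by
      refine ⟨by linarith, ?_⟩
      rw [ip_comp hs0 hμ]
      calc A = innerParallel A s + Metric.closedBall 0 s := hdecomp
        _ = (innerParallel (innerParallel A s) μ + Metric.closedBall 0 μ)
              + Metric.closedBall 0 s := by rw [← heq2]
        _ = innerParallel (innerParallel A s) μ + Metric.closedBall 0 (s + μ) := by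
              rw [add_assoc, hball_add hμ hs0, add_comm μ s]
    have hle : s + μ ≤ s := le_csSup hbdd hmem
    linarith [le_antisymm (by linarith : μ ≤ 0) hμ]
  refine ⟨⟨hs0, hirred, hdecomp⟩, ?_⟩
  intro B lam hBne hBcomp hBconv hlam0 hBirr hAeq
  have hballne : (Metric.closedBall (0 : EuclideanSpace ℝ (Fin n)) lam).Nonempty :=
    ⟨0, by simp [hlam0]⟩
  have hballbdd : Bornology.IsBounded (Metric.closedBall (0 : EuclideanSpace ℝ (Fin n)) lam) :=
    isBounded_closedBall
  have hBip : B = innerParallel A lam := by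
    apply Set.Subset.antisymm
    · intro x hx c hc
      rw [hAeq]; exact Set.add_mem_add hx hc
    · intro tt htt
      have hsub : {tt} + Metric.closedBall (0 : EuclideanSpace ℝ (Fin n)) lam
          ⊆ B + Metric.closedBall 0 lam := by
        rw [← hAeq]
        rintro x ⟨t', ht', c, hc, rfl⟩
        rw [Set.mem_singleton_iff] at ht'
        subst ht'
        exact htt c hc
      exact add_subset_cancel hBconv hBcomp.isClosed hballne hballbdd hsub rfl
  have hlam_mem : lam ∈ regSet A := ⟨hlam0, by rw [← hBip]; exact hAeq⟩
  have hlam_le : lam ≤ s := le_csSup hbdd hlam_mem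
  set μ := s - lam with hμdef
  have hμ0 : 0 ≤ μ := by simp [hμdef]; linarith
  have hipc : innerParallel A s = innerParallel B μ := by
    rw [hBip]
    rw [← ip_comp hlam0 hμ0]
    congr 1
    simp [hμdef]
  have hYeq : B + Metric.closedBall 0 lam
      = (innerParallel B μ + Metric.closedBall 0 μ) + Metric.closedBall 0 lam := by
    calc B + Metric.closedBall 0 lam = A := hAeq.symm
      _ = innerParallel A s + Metric.closedBall 0 s := hdecomp
      _ = innerParallel B μ + (Metric.closedBall 0 μ + Metric.closedBall 0 lam) := by
          rw [hipc, hball_add hμ0 hlam0]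
          congr 1
          simp [hμdef]
      _ = (innerParallel B μ + Metric.closedBall 0 μ) + Metric.closedBall 0 lam := by
          rw [add_assoc]
  have hYconv : Convex ℝ (innerParallel B μ + Metric.closedBall 0 μ) :=
    (ip_convex hBconv μ).add (convex_closedBall _ _)
  have hipBcomp : IsCompact (innerParallel B μ) :=
    hBcomp.of_isClosed_subset (ip_closed hBcomp.isClosed μ) (ip_subset hμ0)
  have hYclosed : IsClosed (innerParallel B μ + Metric.closedBall 0 μ) :=
    (hipBcomp.add (isCompact_closedBall _ _)).isClosed
  have hBY : B = innerParallel B μ + Metric.closedBall 0 μ :=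
    Set.Subset.antisymm
      (add_subset_cancel hYconv hYclosed hballne hballbdd hYeq.subset)
      (add_subset_cancel hBconv hBcomp.isClosed hballne hballbdd hYeq.symm.subset)
  have hμeq : μ = 0 := hBirr μ hμ0 hBY
  have hlam_eq : lam = s := by
    have : s - lam = 0 := hμeq
    linarith
  exact ⟨by rw [hBip, hlam_eq], hlam_eq⟩
end
end
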